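/- Let m be a deficient number with deficience d = 2m − σ(m), and let p_1, …, p_k be primes with m < p_1 < p_2 < ⋯ < p_k. If p_1 > 2km/d − k/2, then m·p_1⋯p_k is deficient. -/

import Mathlib

/-- `sigma' n` is the sum of all divisors of `n` (including `n`). -/
def sigma' (n : ℕ) : ℕ := ∑ d ∈ n.divisors, d

/-- A natural number is abundant if `σ(n) > 2n`. -/
def Abundant (n : ℕ) : Prop := 2 * n < sigma' n

/-- A natural number is deficient if `σ(n) < 2n`. -/
def Deficient (n : ℕ) : Prop := sigma' n < 2 * n

/-- A natural number is semiperfect if it is the sum of some set of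
its distinct proper divisors. -/
def Semiperfect (n : ℕ) : Prop := ∃ S ⊆ n.properDivisors, ∑ d ∈ S, d = n

/-- A natural number is weird if it is abundant but not semiperfect. -/
def Weird (n : ℕ) : Prop := Abundant n ∧ ¬ Semiperfect n

lemma sigma'_mul {a b : ℕ} (h : a.Coprime b) : sigma' (a*b) = sigma' a * sigma' b :=
  Nat.Coprime.sum_divisors_mul h

lemma sigma'_prime {p : ℕ} (hp : p.Prime) : sigma' p = p + 1 := by
  rw [sigma', hp.divisors, Finset.sum_pair hp.one_lt.ne]; omega

lemma telescope (x : ℚ) (hx : 0 < x) (k : ℕ) :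
    ∏ i ∈ Finset.range k, (x + i + 1) / (x + i) = (x + k) / x := by
  induction k with
  | zero => simp [div_self hx.ne']
  | succ n ih =>
    rw [Finset.prod_range_succ, ih]
    have h1 : x + n ≠ 0 := by positivity
    field_simp
    push_cast
    ring

/-- Theorem 5(ii).  If `m` is deficient with deficience `d = 2m − σ(m)`, and
`p 0 < p 1 < ⋯ < p (k-1)` are primes with `m < p 0` and
`p 0 > 2km/d − k/2`, then `m · p 0 ⋯ p (k-1)` is deficient. -/
theorem deficient_of_primes_large (m k : ℕ) (p : ℕ → ℕ)
    (hm : Deficient m) (hk : 0 < k)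
    (hprime : ∀ i < k, (p i).Prime)
    (hmp : m < p 0)
    (hmono : ∀ i j, i < j → j < k → p i < p j)
    (hp1 : (p 0 : ℚ) > 2 * k * m / (2 * m - sigma' m) - k / 2) :
    Deficient (m * ∏ i ∈ Finset.range k, p i) := by
  have hm0 : 0 < m := by
    rcases Nat.eq_zero_or_pos m with h | h
    · subst h; simp [Deficient, sigma'] at hm
    · exact h
  have hpm : ∀ i < k, m < p i := by
    intro i hi
    rcases Nat.eq_zero_or_pos i with h | h
    · subst h; exact hmp
    · exact lt_trans hmp (hmono 0 i h hi)
  have hcop : ∀ i < k, Nat.Coprime m (p i) := by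
    intro i hi
    exact (((hprime i hi).coprime_iff_not_dvd).mpr
      (fun hd => absurd (Nat.le_of_dvd hm0 hd) (not_le.mpr (hpm i hi)))).symm
  -- multiplicative formula
  have key : ∀ n ≤ k, sigma' (m * ∏ i ∈ Finset.range n, p i)
      = sigma' m * ∏ i ∈ Finset.range n, (p i + 1) := by
    intro n hn
    induction n with
    | zero => simp
    | succ t ih =>
      have ht : t < k := hn
      have hcp : Nat.Coprime (m * ∏ i ∈ Finset.range t, p i) (p t) := by
        apply Nat.Coprime.mul (hcop t ht)
        apply Nat.Coprime.prod_left
        intro i hi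
        rw [Finset.mem_range] at hi
        exact (Nat.coprime_primes (hprime i (lt_trans hi ht)) (hprime t ht)).mpr
          (Nat.ne_of_lt (hmono i t hi ht))
      rw [Finset.prod_range_succ, ← mul_assoc, sigma'_mul hcp,
        ih (le_of_lt ht), sigma'_prime (hprime t ht), Finset.prod_range_succ, mul_assoc]
  -- lower bound on primes
  have hple : ∀ i, i < k → p 0 + i ≤ p i := by
    intro i
    induction i with
    | zero => simp
    | succ n ih =>
      intro h
      have h1 := ih (Nat.lt_of_succ_lt h)
      have h2 := hmono n (n+1) (Nat.lt_succ_self n) h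
      omega
  -- now work in ℚ
  have hppos : ∀ i < k, (0:ℚ) < p i := fun i hi => by
    exact_mod_cast (hprime i hi).pos
  have hp0 : (0:ℚ) < p 0 := hppos 0 hk
  unfold Deficient
  rw [key k le_rfl, ← Nat.cast_lt (α := ℚ)]
  push_cast
  set s : ℚ := (sigma' m : ℚ) with hs
  have hs0 : 0 ≤ s := by positivity
  have hsm : s < 2 * m := by
    have h := hm; unfold Deficient at h; rw [hs]; exact_mod_cast h
  set d : ℚ := 2 * m - s with hd
  have hdpos : 0 < d := by simp [hd]; linarith
  have hk1 : (1:ℚ) ≤ k := by exact_mod_cast hk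
  -- step 2 : s * (p0 + k) < 2 m p0
  have hdiv : 2 * (k:ℚ) * m / d < p 0 + k / 2 := by linarith
  have hstep2 : s * ((p 0 : ℚ) + k) < 2 * m * p 0 := by
    have h2 : 2 * (k:ℚ) * m < ((p 0 : ℚ) + k / 2) * d := by
      rw [← div_lt_iff₀ hdpos]; exact hdiv
    have h3 : 0 < d * k := mul_pos hdpos (by linarith)
    have hse : s = 2 * m - d := by rw [hd]; ring
    rw [hse]; nlinarith
  -- step 1 : product of  (p i + 1)  bounded
  set P : ℚ := ∏ i ∈ Finset.range k, (p i : ℚ) with hP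
  have hPpos : 0 < P := Finset.prod_pos (fun i hi => hppos i (Finset.mem_range.mp hi))
  set R : ℚ := ∏ i ∈ Finset.range k, ((p i : ℚ) + 1) / (p i : ℚ) with hR
  have hQ : (∏ i ∈ Finset.range k, ((p i : ℚ) + 1)) = P * R := by
    rw [hP, hR, ← Finset.prod_mul_distrib]
    apply Finset.prod_congr rfl
    intro i hi
    rw [mul_div_cancel₀ _ (hppos i (Finset.mem_range.mp hi)).ne']
  have hRle : R ≤ ((p 0 : ℚ) + k) / (p 0 : ℚ) := by
    rw [← telescope (p 0 : ℚ) hp0 k, hR]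
    apply Finset.prod_le_prod
    · intro i hi
      have := hppos i (Finset.mem_range.mp hi)
      positivity
    · intro i hi
      have hik := Finset.mem_range.mp hi
      have hpi := hppos i hik
      have hi0 : (0:ℚ) < (p 0 : ℚ) + i := by positivity
      rw [div_le_div_iff₀ hpi hi0]
      have hle : (p 0 : ℚ) + i ≤ p i := by exact_mod_cast hple i hik
      nlinarith
  -- combine
  calc s * ∏ i ∈ Finset.range k, ((p i : ℚ) + 1)
      = s * (P * R) := by rw [hQ]
    _ ≤ s * (P * (((p 0 : ℚ) + k) / (p 0 : ℚ))) := by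
        apply mul_le_mul_of_nonneg_left _ hs0
        exact mul_le_mul_of_nonneg_left hRle hPpos.le
    _ = (s * ((p 0 : ℚ) + k)) / (p 0 : ℚ) * P := by ring
    _ < 2 * m * P := by
        apply mul_lt_mul_of_pos_right _ hPpos
        rw [div_lt_iff₀ hp0]
        linarith [hstep2]
    _ = 2 * (m * P) := by ring
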